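/- Suppose logarithmic Sobolev inequalities hold for two finite-state reversible Markov generators with constants C₁ and C₂: Entᵢ(f) ≤ Cᵢ·Dᵢ(√f) for densities f on state spaces X₁, X₂. Then the product chain on X₁ × X₂ (independent superposition) satisfies a log-Sobolev inequality with constant max(C₁, C₂): Ent(f) ≤ max(C₁,C₂)·(D₁ ⊕ D₂)(√f), where (D₁ ⊕ D₂) applies D₁ in the first coordinate averaged over the second plus D₂ in the second averaged over the first. -/

import Mathlib

open Finset

-- pointwise x - 1 ≤ x log x
lemma mul_log_ge {x : ℝ} (hx : 0 ≤ x) : x - 1 ≤ x * Real.log x := by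
  rcases hx.eq_or_lt with h | h
  · simp [← h]
  · have h2 := Real.log_le_sub_one_of_pos (inv_pos.mpr h)
    rw [Real.log_inv] at h2
    have : x * x⁻¹ = 1 := mul_inv_cancel₀ h.ne'
    nlinarith

lemma ent_nonneg {ι : Type*} [Fintype ι] (μ f : ι → ℝ) (hμ : ∀ x, 0 ≤ μ x)
    (hμs : ∑ x, μ x = 1) (hf : ∀ x, 0 ≤ f x) (hs : ∑ x, μ x * f x = 1) :
    0 ≤ ∑ x, μ x * (f x * Real.log (f x)) := by
  have h1 : ∑ x, μ x * (f x - 1) ≤ ∑ x, μ x * (f x * Real.log (f x)) :=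
    Finset.sum_le_sum fun x _ => mul_le_mul_of_nonneg_left (mul_log_ge (hf x)) (hμ x)
  have h2 : ∑ x, μ x * (f x - 1) = 0 := by
    simp_rw [mul_sub, mul_one, Finset.sum_sub_distrib, hs, hμs, sub_self]
  linarith

lemma lsq_vanish {ι : Type*} [Fintype ι] [DecidableEq ι] (μ : ι → ℝ) (q : ι → ι → ℝ)
    (hμ : ∀ x, 0 ≤ μ x) (hμs : ∑ x, μ x = 1) (hq : ∀ x y, 0 ≤ q x y) {C : ℝ} (hC : C < 0)
    (hLS : ∀ f : ι → ℝ, (∀ x, 0 ≤ f x) → ∑ x, μ x * f x = 1 →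
      ∑ x, μ x * (f x * Real.log (f x)) ≤ C * ∑ x, ∑ y, μ x * q x y *
        (Real.sqrt (f y) - Real.sqrt (f x)) ^ 2) :
    ∀ x y, x ≠ y → μ x * q x y = 0 := by
  intro x y hxy
  by_contra h
  have hμx : 0 < μ x := (hμ x).lt_of_ne' fun h0 => h (by rw [h0, zero_mul])
  have hqxy : 0 < q x y := (hq x y).lt_of_ne' fun h0 => h (by rw [h0, mul_zero])
  have hy1 : μ y < 1 := by
    have h1 : μ x + ∑ z ∈ univ.erase x, μ z = 1 := by
      rw [Finset.add_sum_erase _ _ (mem_univ x)]; exact hμs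
    have h2 : μ y ≤ ∑ z ∈ univ.erase x, μ z :=
      Finset.single_le_sum (fun z _ => hμ z) (mem_erase.mpr ⟨hxy.symm, mem_univ y⟩)
    linarith
  set c : ℝ := (1 - μ y)⁻¹ with hc
  have hcpos : 0 < c := inv_pos.mpr (by linarith)
  set f : ι → ℝ := fun z => if z = y then 0 else c with hfdef
  have hf : ∀ z, 0 ≤ f z := fun z => by
    by_cases hz : z = y <;> simp [hfdef, hz, hcpos.le]
  have hfs : ∑ z, μ z * f z = 1 := by
    rw [← Finset.add_sum_erase _ (fun z => μ z * f z) (mem_univ y)]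
    have h1 : ∑ z ∈ univ.erase y, μ z * f z = (∑ z ∈ univ.erase y, μ z) * c := by
      rw [Finset.sum_mul]
      exact Finset.sum_congr rfl fun z hz => by
        simp [hfdef, (mem_erase.mp hz).1]
    have h2 : ∑ z ∈ univ.erase y, μ z = 1 - μ y := by
      have := Finset.add_sum_erase _ μ (mem_univ y)
      rw [hμs] at this; linarith
    have hfy0 : f y = 0 := by simp [hfdef]
    rw [hfy0, mul_zero, zero_add, h1, h2, hc, mul_inv_cancel₀ (by linarith : (1:ℝ) - μ y ≠ 0)]
  have hD : 0 < ∑ z, ∑ w, μ z * q z w * (Real.sqrt (f w) - Real.sqrt (f z)) ^ 2 := by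
    have hterm : 0 < μ x * q x y * (Real.sqrt (f y) - Real.sqrt (f x)) ^ 2 := by
      have hfy : f y = 0 := by simp [hfdef]
      have hfx : f x = c := by simp [hfdef, hxy]
      rw [hfy, hfx, Real.sqrt_zero]
      have : (0 - Real.sqrt c) ^ 2 = c := by
        rw [zero_sub, neg_pow, Real.sq_sqrt hcpos.le]; ring
      rw [this]
      positivity
    have hinner : μ x * q x y * (Real.sqrt (f y) - Real.sqrt (f x)) ^ 2
        ≤ ∑ w, μ x * q x w * (Real.sqrt (f w) - Real.sqrt (f x)) ^ 2 :=
      Finset.single_le_sum (f := fun w => μ x * q x w * (Real.sqrt (f w) - Real.sqrt (f x)) ^ 2)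
        (fun w _ => mul_nonneg (mul_nonneg (hμ x) (hq x w)) (sq_nonneg _)) (mem_univ y)
    have houter : ∑ w, μ x * q x w * (Real.sqrt (f w) - Real.sqrt (f x)) ^ 2
        ≤ ∑ z, ∑ w, μ z * q z w * (Real.sqrt (f w) - Real.sqrt (f z)) ^ 2 :=
      Finset.single_le_sum
        (f := fun z => ∑ w, μ z * q z w * (Real.sqrt (f w) - Real.sqrt (f z)) ^ 2)
        (fun z _ => Finset.sum_nonneg fun w _ =>
          mul_nonneg (mul_nonneg (hμ z) (hq z w)) (sq_nonneg _)) (mem_univ x)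
    linarith
  have hent := ent_nonneg μ f hμ hμs hf hfs
  have := hLS f hf hfs
  nlinarith

lemma cs_sqrt {ι : Type*} [Fintype ι] (w a b : ι → ℝ) (hw : ∀ i, 0 ≤ w i)
    (ha : ∀ i, 0 ≤ a i) (hb : ∀ i, 0 ≤ b i) :
    (Real.sqrt (∑ i, w i * a i) - Real.sqrt (∑ i, w i * b i)) ^ 2
      ≤ ∑ i, w i * (Real.sqrt (a i) - Real.sqrt (b i)) ^ 2 := by
  set A := ∑ i, w i * a i with hA
  set B := ∑ i, w i * b i with hB
  have hAnn : 0 ≤ A := Finset.sum_nonneg fun i _ => mul_nonneg (hw i) (ha i)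
  have hBnn : 0 ≤ B := Finset.sum_nonneg fun i _ => mul_nonneg (hw i) (hb i)
  have key : ∑ i, w i * (Real.sqrt (a i) * Real.sqrt (b i)) ≤ Real.sqrt A * Real.sqrt B := by
    have h := Real.sum_sqrt_mul_sqrt_le (univ : Finset ι)
      (f := fun i => w i * a i) (g := fun i => w i * b i)
      (fun i => mul_nonneg (hw i) (ha i)) (fun i => mul_nonneg (hw i) (hb i))
    calc ∑ i, w i * (Real.sqrt (a i) * Real.sqrt (b i))
        = ∑ i, Real.sqrt (w i * a i) * Real.sqrt (w i * b i) := by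
          refine Finset.sum_congr rfl fun i _ => ?_
          rw [Real.sqrt_mul (hw i), Real.sqrt_mul (hw i)]
          rw [show Real.sqrt (w i) * Real.sqrt (a i) * (Real.sqrt (w i) * Real.sqrt (b i))
            = (Real.sqrt (w i) * Real.sqrt (w i)) * (Real.sqrt (a i) * Real.sqrt (b i)) by ring]
          rw [Real.mul_self_sqrt (hw i)]
      _ ≤ Real.sqrt A * Real.sqrt B := h
  have hL : (Real.sqrt A - Real.sqrt B) ^ 2 = A + B - 2 * (Real.sqrt A * Real.sqrt B) := by
    rw [sub_sq, Real.sq_sqrt hAnn, Real.sq_sqrt hBnn]; ring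
  have hR : ∑ i, w i * (Real.sqrt (a i) - Real.sqrt (b i)) ^ 2
      = A + B - 2 * ∑ i, w i * (Real.sqrt (a i) * Real.sqrt (b i)) := by
    have : ∀ i, w i * (Real.sqrt (a i) - Real.sqrt (b i)) ^ 2
        = w i * a i + w i * b i - 2 * (w i * (Real.sqrt (a i) * Real.sqrt (b i))) := fun i => by
      rw [sub_sq, Real.sq_sqrt (ha i), Real.sq_sqrt (hb i)]; ring
    rw [Finset.sum_congr rfl fun i _ => this i, Finset.sum_sub_distrib, Finset.sum_add_distrib,
      ← Finset.mul_sum]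
  linarith
theorem logSobolev_tensorization {X₁ X₂ : Type*} [Fintype X₁] [Fintype X₂]
    (μ₁ : X₁ → ℝ) (μ₂ : X₂ → ℝ) (q₁ : X₁ → X₁ → ℝ) (q₂ : X₂ → X₂ → ℝ)
    (hμ₁ : ∀ x, 0 ≤ μ₁ x) (hμ₂ : ∀ y, 0 ≤ μ₂ y)
    (hμ₁s : ∑ x, μ₁ x = 1) (hμ₂s : ∑ y, μ₂ y = 1)
    (hq₁ : ∀ x y, 0 ≤ q₁ x y) (hq₂ : ∀ x y, 0 ≤ q₂ x y)
    (hrev₁ : ∀ x y, μ₁ x * q₁ x y = μ₁ y * q₁ y x)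
    (hrev₂ : ∀ x y, μ₂ x * q₂ x y = μ₂ y * q₂ y x)
    (C₁ C₂ : ℝ)
    (hLS₁ : ∀ f : X₁ → ℝ, (∀ x, 0 ≤ f x) → ∑ x, μ₁ x * f x = 1 →
      ∑ x, μ₁ x * (f x * Real.log (f x))
        ≤ C₁ * ∑ x, ∑ y, μ₁ x * q₁ x y *
            (Real.sqrt (f y) - Real.sqrt (f x)) ^ 2)
    (hLS₂ : ∀ f : X₂ → ℝ, (∀ x, 0 ≤ f x) → ∑ x, μ₂ x * f x = 1 →
      ∑ x, μ₂ x * (f x * Real.log (f x))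
        ≤ C₂ * ∑ x, ∑ y, μ₂ x * q₂ x y *
            (Real.sqrt (f y) - Real.sqrt (f x)) ^ 2) :
    ∀ F : X₁ × X₂ → ℝ, (∀ p, 0 ≤ F p) →
      ∑ x, ∑ y, μ₁ x * μ₂ y * F (x, y) = 1 →
      ∑ x, ∑ y, μ₁ x * μ₂ y * (F (x, y) * Real.log (F (x, y)))
        ≤ max C₁ C₂ *
          ((∑ y, μ₂ y * ∑ x, ∑ x', μ₁ x * q₁ x x' *
              (Real.sqrt (F (x', y)) - Real.sqrt (F (x, y))) ^ 2) +
           (∑ x, μ₁ x * ∑ y, ∑ y', μ₂ y * q₂ y y' *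
              (Real.sqrt (F (x, y')) - Real.sqrt (F (x, y))) ^ 2)) := by
  classical
  intro F hF hFsum
  set C := max C₁ C₂ with hCdef
  set g : X₁ → ℝ := fun x => ∑ y, μ₂ y * F (x, y) with hgdef
  have hgx : ∀ x, g x = ∑ y, μ₂ y * F (x, y) := fun _ => rfl
  have hg : ∀ x, 0 ≤ g x := fun x => Finset.sum_nonneg fun y _ => mul_nonneg (hμ₂ y) (hF _)
  have hgsum : ∑ x, μ₁ x * g x = 1 := by
    simp_rw [hgx, Finset.mul_sum, ← mul_assoc]
    exact hFsum
  -- Step 1: conditional entropy bound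
  have key1 : ∀ x, ∑ y, μ₂ y * (F (x, y) * Real.log (F (x, y)))
      ≤ g x * Real.log (g x) + C₂ * ∑ y, ∑ y', μ₂ y * q₂ y y' *
          (Real.sqrt (F (x, y')) - Real.sqrt (F (x, y))) ^ 2 := by
    intro x
    rcases (hg x).eq_or_lt with h0 | hpos
    · have hzero : ∀ y, μ₂ y * F (x, y) = 0 := fun y =>
        (Finset.sum_eq_zero_iff_of_nonneg (fun y _ => mul_nonneg (hμ₂ y) (hF _))).mp
          ((hgx x).symm.trans h0.symm) y (Finset.mem_univ y)
      have hL : ∑ y, μ₂ y * (F (x, y) * Real.log (F (x, y))) = 0 := by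
        refine Finset.sum_eq_zero fun y _ => ?_
        rcases (hμ₂ y).eq_or_lt with hm | hm
        · rw [← hm, zero_mul]
        · have hF0 : F (x, y) = 0 := by
            rcases mul_eq_zero.mp (hzero y) with h | h
            · exact absurd h hm.ne'
            · exact h
          simp [hF0]
      rw [hL, ← h0]
      simp only [Real.log_zero, mul_zero, zero_mul, zero_add]
      rcases le_or_gt 0 C₂ with hc2 | hc2
      · exact mul_nonneg hc2 (Finset.sum_nonneg fun y _ => Finset.sum_nonneg fun y' _ =>
          mul_nonneg (mul_nonneg (hμ₂ y) (hq₂ y y')) (sq_nonneg _))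
      · have hvan := lsq_vanish μ₂ q₂ hμ₂ hμ₂s hq₂ hc2 hLS₂
        have hD0 : (∑ y, ∑ y', μ₂ y * q₂ y y' *
            (Real.sqrt (F (x, y')) - Real.sqrt (F (x, y))) ^ 2) = 0 :=
          Finset.sum_eq_zero fun y _ => Finset.sum_eq_zero fun y' _ => by
            by_cases hyy : y = y'
            · rw [hyy]; simp
            · rw [hvan y y' hyy, zero_mul]
        rw [hD0, mul_zero]
    · set f : X₂ → ℝ := fun y => F (x, y) / g x with hfdef
      have hf : ∀ y, 0 ≤ f y := fun y => div_nonneg (hF _) (hg x)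
      have hfs : ∑ y, μ₂ y * f y = 1 := by
        simp_rw [hfdef, ← mul_div_assoc]
        rw [← Finset.sum_div, ← hgx x, div_self hpos.ne']
      have hls := hLS₂ f hf hfs
      have h2 := mul_le_mul_of_nonneg_left hls (hg x)
      have hterm : ∀ y, g x * (μ₂ y * (f y * Real.log (f y)))
          = μ₂ y * (F (x, y) * Real.log (F (x, y))) - μ₂ y * F (x, y) * Real.log (g x) := by
        intro y
        rcases (hF (x, y)).eq_or_lt with hF0 | hF0
        · simp [hfdef, ← hF0]
        · simp only [hfdef]
          rw [Real.log_div hF0.ne' hpos.ne']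
          field_simp
      have ha : g x * ∑ y, μ₂ y * (f y * Real.log (f y))
          = ∑ y, μ₂ y * (F (x, y) * Real.log (F (x, y))) - g x * Real.log (g x) := by
        rw [Finset.mul_sum, Finset.sum_congr rfl (fun y _ => hterm y), Finset.sum_sub_distrib,
          ← Finset.sum_mul, ← hgx x]
      have hb : g x * (∑ y, ∑ y', μ₂ y * q₂ y y' * (Real.sqrt (f y') - Real.sqrt (f y)) ^ 2)
          = ∑ y, ∑ y', μ₂ y * q₂ y y' *
              (Real.sqrt (F (x, y')) - Real.sqrt (F (x, y))) ^ 2 := by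
        rw [Finset.mul_sum]
        refine Finset.sum_congr rfl fun y _ => ?_
        rw [Finset.mul_sum]
        refine Finset.sum_congr rfl fun y' _ => ?_
        simp only [hfdef]
        rw [Real.sqrt_div (hF (x, y')), Real.sqrt_div (hF (x, y)), div_sub_div_same, div_pow,
          Real.sq_sqrt (hg x)]
        field_simp
      have h3 : g x * (C₂ * ∑ y, ∑ y', μ₂ y * q₂ y y' *
            (Real.sqrt (f y') - Real.sqrt (f y)) ^ 2)
          = C₂ * ∑ y, ∑ y', μ₂ y * q₂ y y' *
              (Real.sqrt (F (x, y')) - Real.sqrt (F (x, y))) ^ 2 := by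
        rw [mul_left_comm, hb]
      linarith [h2, ha, h3]
  -- Step 2: marginal
  have hEnt1 := hLS₁ g hg hgsum
  -- Step 3: Cauchy-Schwarz
  have hCS : ∀ x x' : X₁, (Real.sqrt (g x') - Real.sqrt (g x)) ^ 2
      ≤ ∑ y, μ₂ y * (Real.sqrt (F (x', y)) - Real.sqrt (F (x, y))) ^ 2 := by
    intro x x'
    have h := cs_sqrt μ₂ (fun y => F (x', y)) (fun y => F (x, y)) hμ₂
      (fun y => hF _) (fun y => hF _)
    rw [hgx x, hgx x']
    exact h
  have hT₂nn : 0 ≤ ∑ x, μ₁ x * ∑ y, ∑ y', μ₂ y * q₂ y y' *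
      (Real.sqrt (F (x, y')) - Real.sqrt (F (x, y))) ^ 2 :=
    Finset.sum_nonneg fun x _ => mul_nonneg (hμ₁ x)
      (Finset.sum_nonneg fun y _ => Finset.sum_nonneg fun y' _ =>
        mul_nonneg (mul_nonneg (hμ₂ y) (hq₂ y y')) (sq_nonneg _))
  have hD1gnn : 0 ≤ ∑ x, ∑ x', μ₁ x * q₁ x x' *
      (Real.sqrt (g x') - Real.sqrt (g x)) ^ 2 :=
    Finset.sum_nonneg fun x _ => Finset.sum_nonneg fun x' _ =>
      mul_nonneg (mul_nonneg (hμ₁ x) (hq₁ x x')) (sq_nonneg _)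
  have hD1T1 : ∑ x, ∑ x', μ₁ x * q₁ x x' * (Real.sqrt (g x') - Real.sqrt (g x)) ^ 2
      ≤ ∑ y, μ₂ y * ∑ x, ∑ x', μ₁ x * q₁ x x' *
          (Real.sqrt (F (x', y)) - Real.sqrt (F (x, y))) ^ 2 := by
    calc ∑ x, ∑ x', μ₁ x * q₁ x x' * (Real.sqrt (g x') - Real.sqrt (g x)) ^ 2
        ≤ ∑ x, ∑ x', μ₁ x * q₁ x x' *
            (∑ y, μ₂ y * (Real.sqrt (F (x', y)) - Real.sqrt (F (x, y))) ^ 2) :=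
          Finset.sum_le_sum fun x _ => Finset.sum_le_sum fun x' _ =>
            mul_le_mul_of_nonneg_left (hCS x x') (mul_nonneg (hμ₁ x) (hq₁ x x'))
      _ = ∑ x, ∑ y, ∑ x', μ₂ y * (μ₁ x * q₁ x x' *
            (Real.sqrt (F (x', y)) - Real.sqrt (F (x, y))) ^ 2) := by
          refine Finset.sum_congr rfl fun x _ => ?_
          simp_rw [Finset.mul_sum]
          rw [Finset.sum_comm]
          exact Finset.sum_congr rfl fun y _ => Finset.sum_congr rfl fun x' _ => by ring
      _ = ∑ y, ∑ x, ∑ x', μ₂ y * (μ₁ x * q₁ x x' *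
            (Real.sqrt (F (x', y)) - Real.sqrt (F (x, y))) ^ 2) := Finset.sum_comm
      _ = ∑ y, μ₂ y * ∑ x, ∑ x', μ₁ x * q₁ x x' *
            (Real.sqrt (F (x', y)) - Real.sqrt (F (x, y))) ^ 2 := by
          refine Finset.sum_congr rfl fun y _ => ?_
          simp_rw [Finset.mul_sum]
  -- final assembly
  have hstep : ∑ x, ∑ y, μ₁ x * μ₂ y * (F (x, y) * Real.log (F (x, y)))
      ≤ C₁ * (∑ x, ∑ x', μ₁ x * q₁ x x' * (Real.sqrt (g x') - Real.sqrt (g x)) ^ 2)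
        + C₂ * ∑ x, μ₁ x * ∑ y, ∑ y', μ₂ y * q₂ y y' *
            (Real.sqrt (F (x, y')) - Real.sqrt (F (x, y))) ^ 2 := by
    calc ∑ x, ∑ y, μ₁ x * μ₂ y * (F (x, y) * Real.log (F (x, y)))
        = ∑ x, μ₁ x * ∑ y, μ₂ y * (F (x, y) * Real.log (F (x, y))) := by
          simp_rw [Finset.mul_sum, mul_assoc]
      _ ≤ ∑ x, μ₁ x * (g x * Real.log (g x) + C₂ * ∑ y, ∑ y', μ₂ y * q₂ y y' *
            (Real.sqrt (F (x, y')) - Real.sqrt (F (x, y))) ^ 2) :=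
          Finset.sum_le_sum fun x _ => mul_le_mul_of_nonneg_left (key1 x) (hμ₁ x)
      _ = ∑ x, μ₁ x * (g x * Real.log (g x))
            + C₂ * ∑ x, μ₁ x * ∑ y, ∑ y', μ₂ y * q₂ y y' *
                (Real.sqrt (F (x, y')) - Real.sqrt (F (x, y))) ^ 2 := by
          simp_rw [mul_add, Finset.sum_add_distrib, Finset.mul_sum, mul_left_comm]
      _ ≤ _ := add_le_add_left hEnt1 _
  have hCT1 : C₁ * (∑ x, ∑ x', μ₁ x * q₁ x x' * (Real.sqrt (g x') - Real.sqrt (g x)) ^ 2)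
      ≤ C * ∑ y, μ₂ y * ∑ x, ∑ x', μ₁ x * q₁ x x' *
          (Real.sqrt (F (x', y)) - Real.sqrt (F (x, y))) ^ 2 := by
    rcases le_or_gt 0 C with hCnn | hCneg
    · calc C₁ * (∑ x, ∑ x', μ₁ x * q₁ x x' * (Real.sqrt (g x') - Real.sqrt (g x)) ^ 2)
          ≤ C * (∑ x, ∑ x', μ₁ x * q₁ x x' * (Real.sqrt (g x') - Real.sqrt (g x)) ^ 2) :=
            mul_le_mul_of_nonneg_right (le_max_left _ _) hD1gnn
        _ ≤ _ := mul_le_mul_of_nonneg_left hD1T1 hCnn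
    · have hC1 : C₁ < 0 := lt_of_le_of_lt (le_max_left C₁ C₂) hCneg
      have hvan := lsq_vanish μ₁ q₁ hμ₁ hμ₁s hq₁ hC1 hLS₁
      have hD1g0 : (∑ x, ∑ x', μ₁ x * q₁ x x' *
          (Real.sqrt (g x') - Real.sqrt (g x)) ^ 2) = 0 :=
        Finset.sum_eq_zero fun x _ => Finset.sum_eq_zero fun x' _ => by
          by_cases hxx : x = x'
          · rw [hxx]; simp
          · rw [hvan x x' hxx, zero_mul]
      have hT10 : (∑ y, μ₂ y * ∑ x, ∑ x', μ₁ x * q₁ x x' *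
          (Real.sqrt (F (x', y)) - Real.sqrt (F (x, y))) ^ 2) = 0 :=
        Finset.sum_eq_zero fun y _ => by
          rw [Finset.sum_eq_zero fun x _ => Finset.sum_eq_zero fun x' _ => by
            by_cases hxx : x = x'
            · rw [hxx]; simp
            · rw [hvan x x' hxx, zero_mul], mul_zero]
      rw [hD1g0, hT10, mul_zero, mul_zero]
  have hCT2 : C₂ * (∑ x, μ₁ x * ∑ y, ∑ y', μ₂ y * q₂ y y' *
        (Real.sqrt (F (x, y')) - Real.sqrt (F (x, y))) ^ 2)
      ≤ C * ∑ x, μ₁ x * ∑ y, ∑ y', μ₂ y * q₂ y y' *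
          (Real.sqrt (F (x, y')) - Real.sqrt (F (x, y))) ^ 2 :=
    mul_le_mul_of_nonneg_right (le_max_right _ _) hT₂nn
  rw [mul_add]
  linarith [hstep, hCT1, hCT2]
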